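/- In the College Admissions problem with lower quotas, let X be the set of colleges that do not reach their lower quotas in the stable matchings of the instance with all lower quotas ignored. For a college c_j ∈ X, if c_j still does not reach its lower quota in the stable matchings of the instance where all colleges of X except c_j are closed (deleted), then c_j must be closed in every stable matching respecting the lower quotas. -/

import Mathlib

open Finset
open scoped Classical

open Finset

/-- Feasibility of a (0/1-encoded) matching `x` for a College Admissions
instance with application set `E` and upper quotas `u`: each variable is
binary, only actual applications can be matched, each applicant is assigned
to at most one college, and no college exceeds its quota. -/
def Feasible {n m : ℕ} (E : Finset (Fin n × Fin m)) (u : Fin m → ℕ)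
    (x : Fin n → Fin m → ℕ) : Prop :=
  (∀ i j, x i j ≤ 1) ∧ (∀ i j, x i j = 1 → (i, j) ∈ E) ∧
  (∀ i : Fin n, ∑ j, x i j ≤ 1) ∧ (∀ j : Fin m, ∑ i, x i j ≤ u j)

/-- Classical stability: there is no application `(i, j)` such that `i` is
unmatched or prefers `j` to her assigned college (rank `r`, lower is better),
while `j` has an unfilled place or admits an applicant with a lower score. -/
def Stable {n m : ℕ} (E : Finset (Fin n × Fin m)) (r s : Fin n → Fin m → ℕ)
    (u : Fin m → ℕ) (x : Fin n → Fin m → ℕ) : Prop :=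
  ¬ ∃ i j, (i, j) ∈ E ∧
    (∀ k, x i k = 1 → r i j < r i k) ∧
    ((∑ h, x h j) < u j ∨ ∃ h, x h j = 1 ∧ s h j < s i j)


/-- Stability for the College Admissions problem with lower quotas `l` and
upper quotas `u`, with `o j = 1` iff college `j` is open: the matching is
feasible (closed colleges empty, open colleges between their quotas), no
application blocks with an open college in the classical sense, and no
closed college has at least `l j` applicants who are unmatched or prefer it
to their assignment. -/
noncomputable def LQStable {n m : ℕ} (E : Finset (Fin n × Fin m))
    (r s : Fin n → Fin m → ℕ) (l u : Fin m → ℕ)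
    (x : Fin n → Fin m → ℕ) (o : Fin m → ℕ) : Prop :=
  (∀ i j, x i j ≤ 1) ∧ (∀ j, o j ≤ 1) ∧ (∀ i j, x i j = 1 → (i, j) ∈ E) ∧
  (∀ i : Fin n, ∑ j, x i j ≤ 1) ∧
  (∀ j, o j = 1 → l j ≤ ∑ i, x i j ∧ ∑ i, x i j ≤ u j) ∧
  (∀ j, o j = 0 → ∑ i, x i j = 0) ∧
  (¬ ∃ i j, (i, j) ∈ E ∧ o j = 1 ∧
    (∀ k, x i k = 1 → r i j < r i k) ∧
    ((∑ h, x h j) < u j ∨ ∃ h, x h j = 1 ∧ s h j < s i j)) ∧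
  (∀ j, o j = 0 →
    (Finset.univ.filter fun i =>
      (i, j) ∈ E ∧ ∀ k, x i k = 1 → r i j < r i k).card < l j)

namespace DAwork

lemma enat_sInf_mem {S : Set ℕ∞} (h : S.Nonempty) : sInf S ∈ S := by
  obtain ⟨a, ha, hmin⟩ := (IsWellFounded.wf (r := ((· < ·) : ℕ∞ → ℕ∞ → Prop))).has_min S h
  have : sInf S = a :=
    le_antisymm (sInf_le ha) (le_sInf fun b hb => not_lt.1 fun hba => hmin b hb hba)
  exact this ▸ ha

lemma sum_binary {N : ℕ} (g : Fin N → ℕ) (hg : ∀ i, g i ≤ 1) :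
    ∑ i, g i = (Finset.univ.filter fun i => g i = 1).card := by
  rw [Finset.card_filter]
  refine Finset.sum_congr rfl fun i _ => ?_
  have := hg i
  interval_cases h : g i <;> simp

variable {n m : ℕ}

/-- Students willing to go to `j` given cutoffs `P`. -/
noncomputable def Aset (E : Finset (Fin n × Fin m)) (r s : Fin n → Fin m → ℕ)
    (P : Fin m → ℕ∞) (j : Fin m) : Finset (Fin n) :=
  Finset.univ.filter fun i => (i, j) ∈ E ∧
    ∀ k, k ≠ j → (i, k) ∈ E → P k ≤ (s i k : ℕ∞) → r i j < r i k

noncomputable def Ncnt (E : Finset (Fin n × Fin m)) (r s : Fin n → Fin m → ℕ)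
    (P : Fin m → ℕ∞) (j : Fin m) (c : ℕ∞) : ℕ :=
  ((Aset E r s P j).filter fun i => c ≤ (s i j : ℕ∞)).card

noncomputable def Tfun (E : Finset (Fin n × Fin m)) (r s : Fin n → Fin m → ℕ)
    (u : Fin m → ℕ) (P : Fin m → ℕ∞) (j : Fin m) : ℕ∞ :=
  sInf {c : ℕ∞ | Ncnt E r s P j c ≤ u j}

lemma Aset_mono (E : Finset (Fin n × Fin m)) (r s : Fin n → Fin m → ℕ)
    {P P' : Fin m → ℕ∞} (h : P ≤ P') (j : Fin m) :
    Aset E r s P j ⊆ Aset E r s P' j := by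
  intro i hi
  simp only [Aset, Finset.mem_filter, Finset.mem_univ, true_and] at hi ⊢
  exact ⟨hi.1, fun k hk hkE hks => hi.2 k hk hkE (le_trans (h k) hks)⟩

lemma Ncnt_top (E : Finset (Fin n × Fin m)) (r s : Fin n → Fin m → ℕ)
    (P : Fin m → ℕ∞) (j : Fin m) : Ncnt E r s P j ⊤ = 0 := by
  rw [Ncnt, Finset.card_eq_zero, Finset.filter_eq_empty_iff]
  intro i _
  simp

lemma Tset_nonempty (E : Finset (Fin n × Fin m)) (r s : Fin n → Fin m → ℕ)
    (u : Fin m → ℕ) (P : Fin m → ℕ∞) (j : Fin m) :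
    {c : ℕ∞ | Ncnt E r s P j c ≤ u j}.Nonempty :=
  ⟨⊤, by simp [Ncnt_top]⟩

lemma Tfun_mem (E : Finset (Fin n × Fin m)) (r s : Fin n → Fin m → ℕ)
    (u : Fin m → ℕ) (P : Fin m → ℕ∞) (j : Fin m) :
    Ncnt E r s P j (Tfun E r s u P j) ≤ u j :=
  enat_sInf_mem (Tset_nonempty E r s u P j)

lemma Tfun_min (E : Finset (Fin n × Fin m)) (r s : Fin n → Fin m → ℕ)
    (u : Fin m → ℕ) (P : Fin m → ℕ∞) (j : Fin m) {c : ℕ∞}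
    (hc : c < Tfun E r s u P j) : u j < Ncnt E r s P j c := by
  by_contra h
  exact absurd (sInf_le (show c ∈ {c' : ℕ∞ | Ncnt E r s P j c' ≤ u j} from not_lt.1 h))
    (not_le.2 hc)

/-- The DA operator as an order hom. -/
noncomputable def Thom (E : Finset (Fin n × Fin m)) (r s : Fin n → Fin m → ℕ)
    (u : Fin m → ℕ) : (Fin m → ℕ∞) →o (Fin m → ℕ∞) where
  toFun P := Tfun E r s u P
  monotone' := by
    intro P P' h j
    apply sInf_le_sInf
    intro c hc
    simp only [Set.mem_setOf_eq] at hc ⊢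
    refine le_trans (Finset.card_le_card ?_) hc
    exact Finset.filter_subset_filter _ (Aset_mono E r s h j)

noncomputable def lfpP (E : Finset (Fin n × Fin m)) (r s : Fin n → Fin m → ℕ)
    (u : Fin m → ℕ) : Fin m → ℕ∞ :=
  OrderHom.lfp (Thom E r s u)

lemma lfp_fixed (E : Finset (Fin n × Fin m)) (r s : Fin n → Fin m → ℕ)
    (u : Fin m → ℕ) : Tfun E r s u (lfpP E r s u) = lfpP E r s u :=
  OrderHom.map_lfp (Thom E r s u)

noncomputable def xOf (E : Finset (Fin n × Fin m)) (r s : Fin n → Fin m → ℕ)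
    (P : Fin m → ℕ∞) : Fin n → Fin m → ℕ :=
  fun i j => if i ∈ Aset E r s P j ∧ P j ≤ (s i j : ℕ∞) then 1 else 0

lemma xOf_le_one (E : Finset (Fin n × Fin m)) (r s : Fin n → Fin m → ℕ)
    (P : Fin m → ℕ∞) (i : Fin n) (j : Fin m) : xOf E r s P i j ≤ 1 := by
  unfold xOf; split <;> simp

lemma xOf_eq_one (E : Finset (Fin n × Fin m)) (r s : Fin n → Fin m → ℕ)
    {P : Fin m → ℕ∞} {i : Fin n} {j : Fin m} :
    xOf E r s P i j = 1 ↔ i ∈ Aset E r s P j ∧ P j ≤ (s i j : ℕ∞) := by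
  unfold xOf; split <;> simp_all

lemma Aset_mem_E {E : Finset (Fin n × Fin m)} {r s : Fin n → Fin m → ℕ}
    {P : Fin m → ℕ∞} {i : Fin n} {j : Fin m} (h : i ∈ Aset E r s P j) :
    (i, j) ∈ E := by
  simp only [Aset, Finset.mem_filter] at h; exact h.2.1

lemma Aset_best {E : Finset (Fin n × Fin m)} {r s : Fin n → Fin m → ℕ}
    {P : Fin m → ℕ∞} {i : Fin n} {j : Fin m} (h : i ∈ Aset E r s P j)
    {k : Fin m} (hk : k ≠ j) (hkE : (i, k) ∈ E) (hks : P k ≤ (s i k : ℕ∞)) :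
    r i j < r i k := by
  simp only [Aset, Finset.mem_filter] at h; exact h.2.2 k hk hkE hks

lemma xOf_unique (E : Finset (Fin n × Fin m)) (r s : Fin n → Fin m → ℕ)
    {P : Fin m → ℕ∞} {i : Fin n} {j k : Fin m}
    (hj : xOf E r s P i j = 1) (hk : xOf E r s P i k = 1) : j = k := by
  by_contra hne
  rw [xOf_eq_one] at hj hk
  have h1 := Aset_best hj.1 (Ne.symm hne) (Aset_mem_E hk.1) hk.2
  have h2 := Aset_best hk.1 hne (Aset_mem_E hj.1) hj.2
  omega

lemma xOf_row (E : Finset (Fin n × Fin m)) (r s : Fin n → Fin m → ℕ)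
    (P : Fin m → ℕ∞) (i : Fin n) : ∑ j, xOf E r s P i j ≤ 1 := by
  rw [sum_binary _ (fun j => xOf_le_one E r s P i j)]
  refine Finset.card_le_one.2 fun a ha b hb => ?_
  simp only [Finset.mem_filter] at ha hb
  exact xOf_unique E r s ha.2 hb.2

lemma fill_eq (E : Finset (Fin n × Fin m)) (r s : Fin n → Fin m → ℕ)
    (P : Fin m → ℕ∞) (j : Fin m) :
    ∑ i, xOf E r s P i j = Ncnt E r s P j (P j) := by
  rw [sum_binary _ (fun i => xOf_le_one E r s P i j), Ncnt]
  congr 1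
  ext i
  simp only [Finset.mem_filter, Finset.mem_univ, true_and, xOf_eq_one]



/-- If `k` is affordable for `i`, then `i` is matched (to something weakly
better than `k`) in the matching induced by any cutoff vector. -/
lemma demand (E : Finset (Fin n × Fin m)) (r s : Fin n → Fin m → ℕ)
    (hrstrict : ∀ i j k, (i, j) ∈ E → (i, k) ∈ E → r i j = r i k → j = k)
    (P : Fin m → ℕ∞) (i : Fin n) (k : Fin m)
    (hkE : (i, k) ∈ E) (hk : P k ≤ (s i k : ℕ∞)) :
    ∃ j, xOf E r s P i j = 1 ∧ r i j ≤ r i k := by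
  set Bi : Finset (Fin m) :=
    Finset.univ.filter (fun j => (i, j) ∈ E ∧ P j ≤ (s i j : ℕ∞)) with hBi
  have hkB : k ∈ Bi := by simp [hBi, hkE, hk]
  obtain ⟨j₀, hj₀B, hj₀min⟩ := Finset.exists_min_image Bi (r i) ⟨k, hkB⟩
  simp only [hBi, Finset.mem_filter, Finset.mem_univ, true_and] at hj₀B
  refine ⟨j₀, ?_, hj₀min k hkB⟩
  rw [xOf_eq_one]
  refine ⟨?_, hj₀B.2⟩
  simp only [Aset, Finset.mem_filter, Finset.mem_univ, true_and]
  refine ⟨hj₀B.1, fun k' hk' hk'E hk's => ?_⟩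
  have hk'B : k' ∈ Bi := by simp [hBi, hk'E, hk's]
  have hle := hj₀min k' hk'B
  rcases lt_or_eq_of_le hle with h | h
  · exact h
  · exact absurd (hrstrict i j₀ k' hj₀B.1 hk'E h) (Ne.symm hk')

/-- Strict scores: at most one member of `Aset` has a given score. -/
lemma score_card (E : Finset (Fin n × Fin m))
    (r s : Fin n → Fin m → ℕ)
    (hsstrict : ∀ j i i', (i, j) ∈ E → (i', j) ∈ E → s i j = s i' j → i = i')
    (P : Fin m → ℕ∞) (j : Fin m) (v : ℕ) :
    ((Aset E r s P j).filter fun i => s i j = v).card ≤ 1 := by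
  refine Finset.card_le_one.2 fun a ha b hb => ?_
  simp only [Finset.mem_filter] at ha hb
  exact hsstrict j a b (Aset_mem_E ha.1) (Aset_mem_E hb.1) (ha.2.trans hb.2.symm)

lemma lfp_ne_top (E : Finset (Fin n × Fin m)) (r s : Fin n → Fin m → ℕ)
    (u : Fin m → ℕ) {P : Fin m → ℕ∞} (hfix : Tfun E r s u P = P) (j : Fin m) :
    P j ≠ ⊤ := by
  set B : ℕ := (Finset.univ : Finset (Fin n)).sup (fun i => s i j) + 1 with hB
  have hN : Ncnt E r s P j (B : ℕ∞) = 0 := by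
    rw [Ncnt, Finset.card_eq_zero, Finset.filter_eq_empty_iff]
    intro i _
    simp only [not_le, hB]
    have : s i j < B := Nat.lt_succ_of_le (Finset.le_sup (f := fun i => s i j) (Finset.mem_univ i))
    exact_mod_cast this
  have : P j ≤ (B : ℕ∞) := by
    conv_lhs => rw [← hfix]
    exact sInf_le (show (B : ℕ∞) ∈ {c : ℕ∞ | Ncnt E r s P j c ≤ u j} by simp [hN])
  exact ne_top_of_le_ne_top (by simp) this

/-- Complementary slackness: a college with positive cutoff is full. -/
lemma cs_full (E : Finset (Fin n × Fin m)) (r s : Fin n → Fin m → ℕ)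
    (u : Fin m → ℕ)
    (hsstrict : ∀ j i i', (i, j) ∈ E → (i', j) ∈ E → s i j = s i' j → i = i')
    {P : Fin m → ℕ∞} (hfix : Tfun E r s u P = P) {j : Fin m}
    (hj : P j ≠ 0) : ∑ i, xOf E r s P i j = u j := by
  obtain ⟨p, hp⟩ : ∃ p : ℕ, P j = (p : ℕ∞) := by
    obtain ⟨p, hp⟩ := WithTop.ne_top_iff_exists.1 (lfp_ne_top E r s u hfix j)
    exact ⟨p, hp.symm⟩
  have hppos : 0 < p := by
    rcases Nat.eq_zero_or_pos p with h | h
    · exact absurd (by rw [hp, h]; rfl) hj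
    · exact h
  have hlt : ((p - 1 : ℕ) : ℕ∞) < P j := by
    rw [hp]; exact_mod_cast Nat.sub_lt hppos one_pos
  have hmin : u j < Ncnt E r s P j ((p - 1 : ℕ) : ℕ∞) := by
    apply Tfun_min E r s u P j
    rwa [hfix]
  have hsplit : Ncnt E r s P j ((p - 1 : ℕ) : ℕ∞) ≤ Ncnt E r s P j (P j) + 1 := by
    have hsub : (Aset E r s P j).filter (fun i => ((p - 1 : ℕ) : ℕ∞) ≤ (s i j : ℕ∞)) ⊆
        ((Aset E r s P j).filter fun i => P j ≤ (s i j : ℕ∞)) ∪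
        ((Aset E r s P j).filter fun i => s i j = p - 1) := by
      intro i hi
      simp only [Finset.mem_filter, Finset.mem_union] at hi ⊢
      have hsle : p - 1 ≤ s i j := by exact_mod_cast hi.2
      rcases lt_or_eq_of_le hsle with h | h
      · left
        refine ⟨hi.1, ?_⟩
        rw [hp]
        have : p ≤ s i j := by omega
        exact_mod_cast this
      · right; exact ⟨hi.1, h.symm⟩
    calc Ncnt E r s P j ((p - 1 : ℕ) : ℕ∞) ≤ _ := Finset.card_le_card hsub
    _ ≤ _ + _ := Finset.card_union_le _ _
    _ ≤ Ncnt E r s P j (P j) + 1 := by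
        exact Nat.add_le_add le_rfl (score_card E r s hsstrict P j (p - 1))
  have hle : Ncnt E r s P j (P j) ≤ u j := by
    have := Tfun_mem E r s u P j
    rwa [hfix] at this
  rw [fill_eq]
  omega

lemma feasible_xOf (E : Finset (Fin n × Fin m)) (r s : Fin n → Fin m → ℕ)
    (u : Fin m → ℕ) {P : Fin m → ℕ∞} (hfix : Tfun E r s u P = P) :
    Feasible E u (xOf E r s P) := by
  refine ⟨xOf_le_one E r s P, fun i j h => Aset_mem_E ((xOf_eq_one _ _ _).1 h).1,
    xOf_row E r s P, fun j => ?_⟩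
  rw [fill_eq]
  have := Tfun_mem E r s u P j
  rwa [hfix] at this

lemma stable_xOf (E : Finset (Fin n × Fin m)) (r s : Fin n → Fin m → ℕ)
    (u : Fin m → ℕ)
    (hrstrict : ∀ i j k, (i, j) ∈ E → (i, k) ∈ E → r i j = r i k → j = k)
    (hsstrict : ∀ j i i', (i, j) ∈ E → (i', j) ∈ E → s i j = s i' j → i = i')
    {P : Fin m → ℕ∞} (hfix : Tfun E r s u P = P) :
    Stable E r s u (xOf E r s P) := by
  rintro ⟨i, j, hijE, hpref, hor⟩
  have hiA : i ∈ Aset E r s P j := by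
    simp only [Aset, Finset.mem_filter, Finset.mem_univ, true_and]
    refine ⟨hijE, fun k hk hkE hks => ?_⟩
    obtain ⟨j', hj', hle⟩ := demand E r s hrstrict P i k hkE hks
    exact lt_of_lt_of_le (hpref j' hj') hle
  by_cases haff : P j ≤ (s i j : ℕ∞)
  · have : xOf E r s P i j = 1 := (xOf_eq_one _ _ _).2 ⟨hiA, haff⟩
    exact absurd (hpref j this) (lt_irrefl _)
  · have hlt : ((s i j : ℕ) : ℕ∞) < P j := not_le.1 haff
    rcases hor with hfill | ⟨h, hh1, hhs⟩
    · have hj0 : P j ≠ 0 := fun h0 => by simp [h0] at hlt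
      rw [cs_full E r s u hsstrict hfix hj0] at hfill
      omega
    · have : P j ≤ (s h j : ℕ∞) := ((xOf_eq_one _ _ _).1 hh1).2
      have : ((s i j : ℕ) : ℕ∞) < (s h j : ℕ∞) := lt_of_lt_of_le hlt this
      have : s i j < s h j := by exact_mod_cast this
      omega



/-- Canonical cutoffs induced by a matching `y`. -/
noncomputable def cutQ (s : Fin n → Fin m → ℕ) (u : Fin m → ℕ)
    (y : Fin n → Fin m → ℕ) : Fin m → ℕ∞ :=
  fun j => if ∑ i, y i j < u j then 0
    else sInf {c : ℕ∞ | ∃ i, y i j = 1 ∧ (s i j : ℕ∞) = c}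

lemma cutQ_le_score (s : Fin n → Fin m → ℕ) (u : Fin m → ℕ)
    (y : Fin n → Fin m → ℕ) {i : Fin n} {j : Fin m} (h : y i j = 1) :
    cutQ s u y j ≤ (s i j : ℕ∞) := by
  unfold cutQ
  split
  · exact zero_le
  · exact sInf_le ⟨i, h, rfl⟩

lemma prefix_cutQ (E : Finset (Fin n × Fin m)) (r s : Fin n → Fin m → ℕ)
    (u : Fin m → ℕ)
    (hsstrict : ∀ j i i', (i, j) ∈ E → (i', j) ∈ E → s i j = s i' j → i = i')
    (y : Fin n → Fin m → ℕ) (hyF : Feasible E u y) (hyS : Stable E r s u y) :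
    Tfun E r s u (cutQ s u y) ≤ cutQ s u y := by
  obtain ⟨hy1, hyE, hyrow, hycol⟩ := hyF
  intro j
  set Q := cutQ s u y with hQ
  refine sInf_le (show Q j ∈ {c : ℕ∞ | Ncnt E r s Q j c ≤ u j} from ?_)
  simp only [Set.mem_setOf_eq]
  have hsub : (Aset E r s Q j).filter (fun i => Q j ≤ (s i j : ℕ∞)) ⊆
      Finset.univ.filter fun i => y i j = 1 := by
    intro i hi
    simp only [Finset.mem_filter, Finset.mem_univ, true_and] at hi ⊢
    by_contra hyi
    have hyi0 : y i j = 0 := by have := hy1 i j; omega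
    have hpref : ∀ k, y i k = 1 → r i j < r i k := by
      intro k hk
      have hkj : k ≠ j := fun h => by rw [h] at hk; omega
      exact Aset_best hi.1 hkj (hyE i k hk) (cutQ_le_score s u y hk)
    have hnb := hyS
    rw [Stable] at hnb
    push_neg at hnb
    obtain ⟨hnf, hns⟩ := hnb i j (Aset_mem_E hi.1) hpref
    have hQeq : Q j = sInf {c : ℕ∞ | ∃ i, y i j = 1 ∧ (s i j : ℕ∞) = c} := by
      rw [hQ, cutQ, if_neg (not_lt.2 hnf)]
    by_cases hne : ∃ h, y h j = 1 ∧ (s h j : ℕ∞) ∈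
        {c : ℕ∞ | ∃ i, y i j = 1 ∧ (s i j : ℕ∞) = c}
    · obtain ⟨h₀, hh₀, heq⟩ := enat_sInf_mem
        (show {c : ℕ∞ | ∃ i, y i j = 1 ∧ (s i j : ℕ∞) = c}.Nonempty from
          ⟨_, hne.choose_spec.2⟩)
      have hQval : Q j = (s h₀ j : ℕ∞) := by rw [hQeq, heq]
      have h1 : s h₀ j ≤ s i j := by
        have := hi.2; rw [hQval] at this; exact_mod_cast this
      have h2 : s i j ≤ s h₀ j := hns h₀ hh₀
      have : i = h₀ :=
        hsstrict j i h₀ (Aset_mem_E hi.1) (hyE h₀ j hh₀) (le_antisymm h2 h1)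
      rw [this] at hyi0; omega
    · have hMS : {c : ℕ∞ | ∃ i, y i j = 1 ∧ (s i j : ℕ∞) = c} = ∅ := by
        ext c
        simp only [Set.mem_setOf_eq, Set.mem_empty_iff_false, iff_false, not_exists]
        rintro h ⟨hh, rfl⟩
        exact hne ⟨h, hh, ⟨h, hh, rfl⟩⟩
      have : Q j = ⊤ := by rw [hQeq, hMS, sInf_empty]
      rw [this] at hi
      exact absurd hi.2 (by simp)
  calc Ncnt E r s Q j (Q j) ≤ (Finset.univ.filter fun i => y i j = 1).card :=
        Finset.card_le_card hsub
  _ = ∑ i, y i j := (sum_binary _ (fun i => hy1 i j)).symm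
  _ ≤ u j := hycol j



/-- Student-optimality: anything affordable under a prefixed point is weakly
dominated by the least-fixed-point matching. -/
lemma opt (E : Finset (Fin n × Fin m)) (r s : Fin n → Fin m → ℕ) (u : Fin m → ℕ)
    (hrstrict : ∀ i j k, (i, j) ∈ E → (i, k) ∈ E → r i j = r i k → j = k)
    {Q : Fin m → ℕ∞} (hQ : Tfun E r s u Q ≤ Q) (i : Fin n) (k : Fin m)
    (hkE : (i, k) ∈ E) (hk : Q k ≤ (s i k : ℕ∞)) :
    ∃ j, xOf E r s (lfpP E r s u) i j = 1 ∧ r i j ≤ r i k := by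
  have hle : lfpP E r s u ≤ Q := OrderHom.lfp_le (Thom E r s u) hQ
  exact demand E r s hrstrict _ i k hkE (le_trans (hle k) hk)

/-- Rural hospitals: every college admits the same number of students in
every stable matching as in the least-fixed-point matching. -/
lemma rural (E : Finset (Fin n × Fin m)) (r s : Fin n → Fin m → ℕ) (u : Fin m → ℕ)
    (hrstrict : ∀ i j k, (i, j) ∈ E → (i, k) ∈ E → r i j = r i k → j = k)
    (hsstrict : ∀ j i i', (i, j) ∈ E → (i', j) ∈ E → s i j = s i' j → i = i')
    (y : Fin n → Fin m → ℕ) (hyF : Feasible E u y) (hyS : Stable E r s u y) :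
    ∀ j, ∑ i, y i j = ∑ i, xOf E r s (lfpP E r s u) i j := by
  set P := lfpP E r s u with hP
  have hfix : Tfun E r s u P = P := lfp_fixed E r s u
  set w := xOf E r s P with hw
  obtain ⟨hy1, hyE, hyrow, hycol⟩ := hyF
  have hprefix := prefix_cutQ E r s u hsstrict y ⟨hy1, hyE, hyrow, hycol⟩ hyS
  -- every student matched in y is matched at least as well in w
  have hdom : ∀ i k, y i k = 1 → ∃ j, w i j = 1 ∧ r i j ≤ r i k := by
    intro i k hk
    exact opt E r s u hrstrict hprefix i k (hyE i k hk) (cutQ_le_score s u y hk)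
  -- pointwise: fill_w ≤ fill_y
  have hpt : ∀ j, ∑ i, w i j ≤ ∑ i, y i j := by
    intro j
    by_cases hfy : ∑ i, y i j < u j
    · have hsub : (Finset.univ.filter fun i => w i j = 1) ⊆
          Finset.univ.filter fun i => y i j = 1 := by
        intro i hi
        simp only [Finset.mem_filter, Finset.mem_univ, true_and] at hi ⊢
        by_contra hyi
        have hyi0 : y i j = 0 := by have := hy1 i j; omega
        have hijE : (i, j) ∈ E := Aset_mem_E ((xOf_eq_one _ _ _).1 hi).1
        refine hyS ⟨i, j, hijE, fun k hk => ?_, Or.inl hfy⟩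
        obtain ⟨j', hj', hle⟩ := hdom i k hk
        have hj'j : j' = j := xOf_unique E r s hj' hi
        rw [hj'j] at hle
        rcases lt_or_eq_of_le hle with h | h
        · exact h
        · have : j = k := hrstrict i j k hijE (hyE i k hk) h
          rw [this] at hyi0; omega
      calc ∑ i, w i j = _ := sum_binary _ (fun i => xOf_le_one E r s P i j)
      _ ≤ _ := Finset.card_le_card hsub
      _ = ∑ i, y i j := (sum_binary _ (fun i => hy1 i j)).symm
    · have h1 : ∑ i, w i j ≤ u j := (feasible_xOf E r s u hfix).2.2.2 j
      omega
  -- totals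
  have hstud : ∀ i : Fin n, ∑ j, y i j ≤ ∑ j, w i j := by
    intro i
    by_cases hex : ∃ k, y i k = 1
    · obtain ⟨k, hk⟩ := hex
      obtain ⟨j, hj, _⟩ := hdom i k hk
      calc ∑ j, y i j ≤ 1 := hyrow i
      _ ≤ ∑ j', w i j' := by
          have h1 : w i j ≤ ∑ j', w i j' :=
            Finset.single_le_sum (f := fun j' => w i j') (fun _ _ => Nat.zero_le _)
              (Finset.mem_univ j)
          omega
    · have hz : ∀ k, y i k = 0 := by
        intro k; have := hy1 i k; have : ¬ y i k = 1 := fun h => hex ⟨k, h⟩; omega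
      simp [hz]
  have htot : ∑ j, ∑ i, y i j ≤ ∑ j, ∑ i, w i j := by
    calc ∑ j, ∑ i, y i j = ∑ i, ∑ j, y i j := Finset.sum_comm
    _ ≤ ∑ i, ∑ j, w i j := Finset.sum_le_sum fun i _ => hstud i
    _ = ∑ j, ∑ i, w i j := Finset.sum_comm
  intro j
  by_contra hne
  have hlt : ∑ i, w i j < ∑ i, y i j := lt_of_le_of_ne (hpt j) (Ne.symm hne)
  have : ∑ j, ∑ i, w i j < ∑ j, ∑ i, y i j :=
    Finset.sum_lt_sum (fun j _ => hpt j) ⟨j, Finset.mem_univ j, hlt⟩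
  omega



noncomputable def liftQ (D : Finset (Fin m)) (Q : Fin m → ℕ∞) : Fin m → ℕ∞ :=
  fun j => if j ∈ D then ⊤ else Q j

lemma Aset_lift (E : Finset (Fin n × Fin m)) (r s : Fin n → Fin m → ℕ)
    (D : Finset (Fin m)) (Q : Fin m → ℕ∞) {j : Fin m} (hj : j ∉ D) :
    Aset E r s (liftQ D Q) j = Aset (E.filter fun e => e.2 ∉ D) r s Q j := by
  ext i
  simp only [Aset, Finset.mem_filter, Finset.mem_univ, true_and]
  constructor
  · rintro ⟨hE, hall⟩
    refine ⟨⟨hE, hj⟩, fun k hk hkE hks => ?_⟩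
    obtain ⟨hkE', hkD⟩ := hkE
    refine hall k hk hkE' ?_
    simpa [liftQ, hkD] using hks
  · rintro ⟨⟨hE, _⟩, hall⟩
    refine ⟨hE, fun k hk hkE hks => ?_⟩
    by_cases hkD : k ∈ D
    · exfalso
      have : liftQ D Q k = ⊤ := by simp [liftQ, hkD]
      rw [this] at hks
      exact absurd hks (by simp)
    · refine hall k hk ⟨hkE, hkD⟩ ?_
      simpa [liftQ, hkD] using hks

lemma prefix_lift (E : Finset (Fin n × Fin m)) (r s : Fin n → Fin m → ℕ)
    (u : Fin m → ℕ) (D : Finset (Fin m)) {Q : Fin m → ℕ∞}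
    (hQ : Tfun (E.filter fun e => e.2 ∉ D) r s u Q ≤ Q) :
    Tfun E r s u (liftQ D Q) ≤ liftQ D Q := by
  intro j
  by_cases hj : j ∈ D
  · simp [liftQ, hj]
  · have heq : Tfun E r s u (liftQ D Q) j =
        Tfun (E.filter fun e => e.2 ∉ D) r s u Q j := by
      unfold Tfun
      congr 1
      ext c
      unfold Ncnt
      rw [Aset_lift E r s D Q hj]
    rw [heq]
    calc Tfun (E.filter fun e => e.2 ∉ D) r s u Q j ≤ Q j := hQ j
    _ = liftQ D Q j := by simp [liftQ, hj]

lemma restrict_rstrict (E : Finset (Fin n × Fin m)) (E' : Finset (Fin n × Fin m))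
    (r : Fin n → Fin m → ℕ) (hsub : E' ⊆ E)
    (h : ∀ i j k, (i, j) ∈ E → (i, k) ∈ E → r i j = r i k → j = k) :
    ∀ i j k, (i, j) ∈ E' → (i, k) ∈ E' → r i j = r i k → j = k :=
  fun i j k hj hk => h i j k (hsub hj) (hsub hk)

lemma restrict_sstrict (E : Finset (Fin n × Fin m)) (E' : Finset (Fin n × Fin m))
    (s : Fin n → Fin m → ℕ) (hsub : E' ⊆ E)
    (h : ∀ j i i', (i, j) ∈ E → (i', j) ∈ E → s i j = s i' j → i = i') :
    ∀ j i i', (i, j) ∈ E' → (i', j) ∈ E' → s i j = s i' j → i = i' :=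
  fun j i i' hi hi' => h j i i' (hsub hi) (hsub hi')

end DAwork

open DAwork

/-- Let `X` be the set of colleges that do not reach their
lower quotas in the stable matchings of the instance with all lower quotas
ignored. If a college `j₀ ∈ X` still does not reach its lower quota in the
stable matchings of the instance in which all colleges of `X` except `j₀`
are closed (deleted), then `j₀` is closed in every stable matching
respecting the lower quotas. -/
theorem still_unfilled_must_close {n m : ℕ} (E : Finset (Fin n × Fin m))
    (r s : Fin n → Fin m → ℕ) (l u : Fin m → ℕ)
    (hrstrict : ∀ i j k, (i, j) ∈ E → (i, k) ∈ E → r i j = r i k → j = k)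
    (hsstrict : ∀ j i i', (i, j) ∈ E → (i', j) ∈ E → s i j = s i' j → i = i')
    (X : Finset (Fin m))
    (hX : ∀ j, j ∈ X ↔
      ∀ x₀, Feasible E u x₀ → Stable E r s u x₀ → ∑ i, x₀ i j < l j)
    (j₀ : Fin m) (hj₀ : j₀ ∈ X)
    (hstill : ∀ x₁,
      Feasible (E.filter fun e => e.2 ∉ X.erase j₀) u x₁ →
      Stable (E.filter fun e => e.2 ∉ X.erase j₀) r s u x₁ →
      ∑ i, x₁ i j₀ < l j₀) :
    ∀ x o, LQStable E r s l u x o → o j₀ = 0 := by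
  intro x o hLQ
  obtain ⟨hx1, ho1, hxE, hxrow, hopen, hclosed, hnoblock, hclosedcnt⟩ := hLQ
  by_contra h0
  have hoj : o j₀ = 1 := by have := ho1 j₀; omega
  classical
  set C : Finset (Fin m) := Finset.univ.filter (fun j => o j = 0) with hC
  have hmemC : ∀ j, j ∈ C ↔ o j = 0 := by intro j; simp [hC]
  have hECsub : (E.filter fun e => e.2 ∉ C) ⊆ E := Finset.filter_subset _ _
  -- x is feasible and stable in the instance with the closed colleges removed
  have hxopen : ∀ i j, x i j = 1 → o j = 1 := by
    intro i j h
    by_contra ho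
    have ho0 : o j = 0 := by have := ho1 j; omega
    have hz := hclosed j ho0
    have hle : x i j ≤ ∑ i', x i' j :=
      Finset.single_le_sum (f := fun i' => x i' j) (fun _ _ => Nat.zero_le _)
        (Finset.mem_univ i)
    omega
  have hxEC : ∀ i j, x i j = 1 → (i, j) ∈ E.filter fun e => e.2 ∉ C := by
    intro i j h
    refine Finset.mem_filter.2 ⟨hxE i j h, fun hc => ?_⟩
    have := (hmemC j).1 hc
    have := hxopen i j h
    omega
  have hxF : Feasible (E.filter fun e => e.2 ∉ C) u x := by
    refine ⟨hx1, hxEC, hxrow, fun j => ?_⟩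
    by_cases hoj' : o j = 1
    · exact (hopen j hoj').2
    · have ho0 : o j = 0 := by have := ho1 j; omega
      rw [hclosed j ho0]
      exact Nat.zero_le _
  have hxS : Stable (E.filter fun e => e.2 ∉ C) r s u x := by
    rintro ⟨i, j, hij, hp, hor⟩
    obtain ⟨hijE, hjC⟩ := Finset.mem_filter.1 hij
    have hoj' : o j = 1 := by
      have h1 := ho1 j
      have h2 : ¬ o j = 0 := fun h => hjC ((hmemC j).2 h)
      omega
    exact hnoblock ⟨i, j, hijE, hoj', hp, hor⟩
  have hrEC := restrict_rstrict E _ r hECsub hrstrict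
  have hsEC := restrict_sstrict E _ s hECsub hsstrict
  have hQx := prefix_cutQ _ r s u hsEC x hxF hxS
  -- previous lemma: every closed college belongs to X
  have hCX : ∀ j, j ∈ C → j ∈ X := by
    intro j hjC
    have hoj0 : o j = 0 := (hmemC j).1 hjC
    refine (hX j).2 fun x₀ hF hS => ?_
    rw [rural E r s u hrstrict hsstrict x₀ hF hS j]
    have hlift := prefix_lift E r s u C hQx
    have hsub : (Finset.univ.filter fun i => xOf E r s (lfpP E r s u) i j = 1) ⊆
        Finset.univ.filter (fun i =>
          (i, j) ∈ E ∧ ∀ k, x i k = 1 → r i j < r i k) := by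
      intro i hi
      simp only [Finset.mem_filter, Finset.mem_univ, true_and] at hi ⊢
      have hijE : (i, j) ∈ E := Aset_mem_E ((xOf_eq_one _ _ _).1 hi).1
      refine ⟨hijE, fun k hk => ?_⟩
      have hkEC : (i, k) ∈ E.filter fun e => e.2 ∉ C := hxEC i k hk
      have hkC : k ∉ C := (Finset.mem_filter.1 hkEC).2
      have hklift : liftQ C (cutQ s u x) k ≤ (s i k : ℕ∞) := by
        have : liftQ C (cutQ s u x) k = cutQ s u x k := by simp [liftQ, hkC]
        rw [this]
        exact cutQ_le_score s u x hk
      obtain ⟨j', hj', hle⟩ := opt E r s u hrstrict hlift i k (hECsub hkEC) hklift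
      have hj'j : j' = j := xOf_unique E r s hj' hi
      rw [hj'j] at hle
      rcases lt_or_eq_of_le hle with h | h
      · exact h
      · exfalso
        have hjk : j = k := hrstrict i j k hijE (hECsub hkEC) h
        rw [hjk] at hjC
        exact hkC hjC
    calc ∑ i, xOf E r s (lfpP E r s u) i j
        = (Finset.univ.filter fun i => xOf E r s (lfpP E r s u) i j = 1).card :=
          sum_binary _ (fun i => xOf_le_one E r s _ i j)
    _ ≤ _ := Finset.card_le_card hsub
    _ < l j := hclosedcnt j hoj0
  -- the closed set is contained in X.erase j₀
  have hCsub : ∀ j, j ∈ C → j ∈ X.erase j₀ := by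
    intro j hj
    refine Finset.mem_erase.2 ⟨fun hjj => ?_, hCX j hj⟩
    have := (hmemC j).1 hj
    rw [hjj] at this
    omega
  -- the stable matching of the instance where X.erase j₀ is closed
  have hE1sub : (E.filter fun e => e.2 ∉ X.erase j₀) ⊆ E := Finset.filter_subset _ _
  have hr1 := restrict_rstrict E _ r hE1sub hrstrict
  have hs1 := restrict_sstrict E _ s hE1sub hsstrict
  have hfix1 : Tfun (E.filter fun e => e.2 ∉ X.erase j₀) r s u
      (lfpP (E.filter fun e => e.2 ∉ X.erase j₀) r s u) =
      lfpP (E.filter fun e => e.2 ∉ X.erase j₀) r s u := lfp_fixed _ r s u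
  set x1 := xOf (E.filter fun e => e.2 ∉ X.erase j₀) r s
    (lfpP (E.filter fun e => e.2 ∉ X.erase j₀) r s u) with hx1def
  have hx1F : Feasible (E.filter fun e => e.2 ∉ X.erase j₀) u x1 :=
    feasible_xOf _ r s u hfix1
  have hx1S : Stable (E.filter fun e => e.2 ∉ X.erase j₀) r s u x1 :=
    stable_xOf _ r s u hr1 hs1 hfix1
  have hlt := hstill x1 hx1F hx1S
  -- key set identity
  have hE1EC : (E.filter fun e => e.2 ∉ X.erase j₀) =
      ((E.filter fun e => e.2 ∉ C).filter fun e => e.2 ∉ X.erase j₀) := by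
    ext e
    simp only [Finset.mem_filter]
    constructor
    · rintro ⟨he, hD⟩
      exact ⟨⟨he, fun hc => hD (hCsub e.2 hc)⟩, hD⟩
    · rintro ⟨⟨he, _⟩, hD⟩
      exact ⟨he, hD⟩
  -- rural hospitals within the instance E_C
  have hrur := rural _ r s u hrEC hsEC x hxF hxS j₀
  have hlq : l j₀ ≤ ∑ i, x i j₀ := (hopen j₀ hoj).1
  -- monotonicity of the fill of j₀ under closing the colleges of X.erase j₀
  set wC := xOf (E.filter fun e => e.2 ∉ C) r s
    (lfpP (E.filter fun e => e.2 ∉ C) r s u) with hwCdef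
  have hfixC : Tfun (E.filter fun e => e.2 ∉ C) r s u
      (lfpP (E.filter fun e => e.2 ∉ C) r s u) =
      lfpP (E.filter fun e => e.2 ∉ C) r s u := lfp_fixed _ r s u
  have hmon : ∑ i, wC i j₀ ≤ ∑ i, x1 i j₀ := by
    by_cases hsub2 : (Finset.univ.filter fun i => wC i j₀ = 1) ⊆
        (Finset.univ.filter fun i => x1 i j₀ = 1)
    · calc ∑ i, wC i j₀ = _ := sum_binary _ (fun i => xOf_le_one _ r s _ i j₀)
      _ ≤ _ := Finset.card_le_card hsub2
      _ = ∑ i, x1 i j₀ := (sum_binary _ (fun i => xOf_le_one _ r s _ i j₀)).symm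
    · rw [Finset.not_subset] at hsub2
      obtain ⟨i, hiw, hix1⟩ := hsub2
      simp only [Finset.mem_filter, Finset.mem_univ, true_and] at hiw hix1
      have hix0 : x1 i j₀ = 0 := by
        have := xOf_le_one (E.filter fun e => e.2 ∉ X.erase j₀) r s
          (lfpP (E.filter fun e => e.2 ∉ X.erase j₀) r s u) i j₀
        rw [← hx1def] at this
        omega
      -- (i, j₀) blocks x1 unless j₀ is full in x1
      have hijEC : (i, j₀) ∈ E.filter fun e => e.2 ∉ C :=
        Aset_mem_E ((xOf_eq_one _ _ _).1 hiw).1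
      have hijE1 : (i, j₀) ∈ E.filter fun e => e.2 ∉ X.erase j₀ :=
        Finset.mem_filter.2 ⟨(Finset.mem_filter.1 hijEC).1, Finset.notMem_erase j₀ X⟩
      have hQ1 := prefix_cutQ _ r s u hs1 x1 hx1F hx1S
      have hQ1' : Tfun ((E.filter fun e => e.2 ∉ C).filter fun e => e.2 ∉ X.erase j₀)
          r s u (cutQ s u x1) ≤ cutQ s u x1 := by rwa [← hE1EC]
      have hlift2 := prefix_lift (E.filter fun e => e.2 ∉ C) r s u (X.erase j₀) hQ1'
      have hpref : ∀ k, x1 i k = 1 → r i j₀ < r i k := by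
        intro k hk
        have hkE1 : (i, k) ∈ E.filter fun e => e.2 ∉ X.erase j₀ := hx1F.2.1 i k hk
        obtain ⟨hkE, hkD⟩ := Finset.mem_filter.1 hkE1
        have hklift : liftQ (X.erase j₀) (cutQ s u x1) k ≤ (s i k : ℕ∞) := by
          have : liftQ (X.erase j₀) (cutQ s u x1) k = cutQ s u x1 k := by
            simp [liftQ, hkD]
          rw [this]
          exact cutQ_le_score s u x1 hk
        have hkEC : (i, k) ∈ E.filter fun e => e.2 ∉ C := by
          rw [hE1EC] at hkE1
          exact (Finset.mem_filter.1 hkE1).1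
        obtain ⟨j', hj', hle⟩ := opt _ r s u hrEC hlift2 i k hkEC hklift
        have hj'j : j' = j₀ := xOf_unique _ r s hj' hiw
        rw [hj'j] at hle
        rcases lt_or_eq_of_le hle with h | h
        · exact h
        · exfalso
          have : j₀ = k := hrstrict i j₀ k (hECsub hijEC) (hE1sub hkE1) h
          rw [← this] at hk
          omega
      have hnotlt : ¬ ∑ h, x1 h j₀ < u j₀ := by
        intro hflt
        exact hx1S ⟨i, j₀, hijE1, hpref, Or.inl hflt⟩
      have hwCle : ∑ i', wC i' j₀ ≤ u j₀ := (feasible_xOf _ r s u hfixC).2.2.2 j₀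
      omega
  omega
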